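/- For every integer n ≥ 4, the weights P_2 form a probability distribution on {2,…,n−2}: Σ_{s=2}^{n−2} P_2(s) = 1. -/

import Mathlib

/-- The coefficient `β_n` of the size distribution `P_2`. -/
noncomputable def betaN (n : ℕ) : ℝ :=
  if Even n then ((n : ℝ) ^ 2 - 2 * n) / (2 * ((n : ℝ) ^ 2 - 4 * n + 2))
  else ((n : ℝ) - 1) / (2 * ((n : ℝ) - 3))

/-- The SVARM-IQ size distribution `P_2` on `{2,…,n−2}`:
`P_2(s) = β_n/(s(s−1))` if `s ≤ (n−1)/2` and `P_2(s) = β_n/((n−s)(n−s−1))` if `s ≥ n/2`. -/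
noncomputable def P2 (n s : ℕ) : ℝ :=
  if (s : ℝ) ≤ ((n : ℝ) - 1) / 2 then betaN n / ((s : ℝ) * ((s : ℝ) - 1))
  else betaN n / (((n : ℝ) - s) * ((n : ℝ) - s - 1))

private lemma tele (m : ℕ) (hm : 1 ≤ m) :
    ∑ s ∈ Finset.Ioc 1 m, (1:ℝ)/((s:ℝ)*((s:ℝ)-1)) = 1 - 1/m := by
  induction m with
  | zero => omega
  | succ m ih =>
    rcases Nat.lt_or_ge m 1 with h|h
    · interval_cases m
      simp
    · rw [Finset.sum_Ioc_succ_top (by omega), ih h]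
      have hm0 : (m:ℝ) ≠ 0 := by positivity
      have hm1 : (m:ℝ)+1 ≠ 0 := by positivity
      push_cast
      rw [add_sub_cancel_right]
      field_simp
      ring

private lemma reflect_sum (n a b k : ℕ) (ha : 1 ≤ a) (hab : a ≤ b) (hb : b + 1 < n)
    (h1 : n - b = 2) (h2 : n - a = k + 1) (f : ℕ → ℝ) :
    ∑ s ∈ Finset.Ioc a b, f (n - s) = ∑ t ∈ Finset.Ioc 1 k, f t := by
  apply Finset.sum_nbij' (i := fun s => n - s) (j := fun t => n - t)
  · intro x hx; simp only [Finset.mem_Ioc] at *; omega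
  · intro x hx; simp only [Finset.mem_Ioc] at *; omega
  · intro x hx; simp only [Finset.mem_Ioc] at *; omega
  · intro x hx; simp only [Finset.mem_Ioc] at *; omega
  · intro x hx; rfl

/-- For every `n ≥ 4`, the weights `P_2` form a probability distribution on `{2,…,n−2}`. -/
theorem P2_sum_eq_one (n : ℕ) (hn : 4 ≤ n) :
    ∑ s ∈ Finset.Icc 2 (n - 2), P2 n s = 1 := by
  rw [show (2:ℕ) = 1 + 1 from rfl, Finset.Icc_add_one_left_eq_Ioc]
  rcases Nat.even_or_odd n with he | ho
  · -- even case, n = 2k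
    obtain ⟨k, hk⟩ := he
    have hk2 : 2 ≤ k := by omega
    have hnr : (n:ℝ) = 2*k := by rw [hk]; push_cast; ring
    have hkr : (2:ℝ) ≤ k := by exact_mod_cast hk2
    rw [← Finset.sum_Ioc_consecutive _ (show 1 ≤ k-1 by omega) (show k-1 ≤ n-2 by omega)]
    have key1 : ∑ s ∈ Finset.Ioc 1 (k-1), P2 n s
        = betaN n * ∑ s ∈ Finset.Ioc 1 (k-1), (1:ℝ)/((s:ℝ)*((s:ℝ)-1)) := by
      rw [Finset.mul_sum]
      refine Finset.sum_congr rfl fun s hs => ?_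
      simp only [Finset.mem_Ioc] at hs
      rw [P2, if_pos]
      · ring
      · have : (s:ℝ) ≤ (k:ℝ) - 1 := by
          have : ((s:ℕ):ℝ) ≤ ((k-1:ℕ):ℝ) := by exact_mod_cast hs.2
          rwa [Nat.cast_sub (by omega), Nat.cast_one] at this
        rw [hnr]; linarith
    have key2 : ∑ s ∈ Finset.Ioc (k-1) (n-2), P2 n s
        = betaN n * ∑ t ∈ Finset.Ioc 1 k, (1:ℝ)/((t:ℝ)*((t:ℝ)-1)) := by
      rw [← reflect_sum n (k-1) (n-2) k (by omega) (by omega) (by omega) (by omega) (by omega),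
        Finset.mul_sum]
      refine Finset.sum_congr rfl fun s hs => ?_
      simp only [Finset.mem_Ioc] at hs
      rw [P2, if_neg]
      · have hsn : s ≤ n := by omega
        rw [show ((n:ℝ) - s) = ((n - s : ℕ):ℝ) by rw [Nat.cast_sub hsn]]
        ring
      · have : (k:ℝ) ≤ (s:ℝ) := by exact_mod_cast (by omega : k ≤ s)
        rw [hnr]; push_neg; linarith
    rw [key1, key2, tele (k-1) (by omega), tele k (by omega)]
    rw [Nat.cast_sub (by omega), Nat.cast_one]
    have hb : betaN n = ((n : ℝ) ^ 2 - 2 * n) / (2 * ((n : ℝ) ^ 2 - 4 * n + 2)) := by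
      rw [betaN, if_pos ⟨k, hk⟩]
    rw [hb, hnr]
    have h1 : (k:ℝ) - 1 ≠ 0 := by intro h; nlinarith
    have h2 : (k:ℝ) ≠ 0 := by positivity
    have h3 : 2 * ((2*(k:ℝ)) ^ 2 - 4 * (2*(k:ℝ)) + 2) ≠ 0 := by nlinarith
    have h3' : 1 - (k:ℝ)*4 + (k:ℝ)^2*2 ≠ 0 := by nlinarith
    field_simp
    ring_nf
    field_simp
    ring
  · -- odd case, n = 2k+1
    obtain ⟨k, hk⟩ := ho
    have hk2 : 2 ≤ k := by omega
    have hnr : (n:ℝ) = 2*k+1 := by rw [hk]; push_cast; ring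
    have hkr : (2:ℝ) ≤ k := by exact_mod_cast hk2
    rw [← Finset.sum_Ioc_consecutive _ (show 1 ≤ k by omega) (show k ≤ n-2 by omega)]
    have key1 : ∑ s ∈ Finset.Ioc 1 k, P2 n s
        = betaN n * ∑ s ∈ Finset.Ioc 1 k, (1:ℝ)/((s:ℝ)*((s:ℝ)-1)) := by
      rw [Finset.mul_sum]
      refine Finset.sum_congr rfl fun s hs => ?_
      simp only [Finset.mem_Ioc] at hs
      rw [P2, if_pos]
      · ring
      · have : (s:ℝ) ≤ (k:ℝ) := by exact_mod_cast hs.2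
        rw [hnr]; linarith
    have key2 : ∑ s ∈ Finset.Ioc k (n-2), P2 n s
        = betaN n * ∑ t ∈ Finset.Ioc 1 k, (1:ℝ)/((t:ℝ)*((t:ℝ)-1)) := by
      rw [← reflect_sum n k (n-2) k (by omega) (by omega) (by omega) (by omega) (by omega),
        Finset.mul_sum]
      refine Finset.sum_congr rfl fun s hs => ?_
      simp only [Finset.mem_Ioc] at hs
      rw [P2, if_neg]
      · have hsn : s ≤ n := by omega
        rw [show ((n:ℝ) - s) = ((n - s : ℕ):ℝ) by rw [Nat.cast_sub hsn]]
        ring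
      · have : (k:ℝ) + 1 ≤ (s:ℝ) := by exact_mod_cast (by omega : k + 1 ≤ s)
        rw [hnr]; push_neg; linarith
    rw [key1, key2, tele k (by omega)]
    have hb : betaN n = ((n : ℝ) - 1) / (2 * ((n : ℝ) - 3)) := by
      rw [betaN, if_neg (by simp [hk, Nat.even_add_one, parity_simps])]
    rw [hb, hnr]
    have h1 : (k:ℝ) - 1 ≠ 0 := by intro h; nlinarith
    have h2 : (k:ℝ) ≠ 0 := by positivity
    have h3 : 2 * ((2*(k:ℝ)+1) - 3) ≠ 0 := by nlinarith
    have h3' : (2*(k:ℝ)+1) - 3 ≠ 0 := by intro h; apply h3; rw [h]; ring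
    field_simp
    ring
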